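/- For every positive integer d, π(P_{d+1}, d) ≥ d!/(d+1)^{d−1}, where P_{d+1} is a perfect path in Q_d (a path of d+1 vertices whose endpoints are at Hamming distance d). -/

import Mathlib

open scoped Classical

/-- The automorphism of the `d`-cube `Q_d` (vertices: `Fin d → Bool`) determined by a
coordinate permutation `π` and a translation (coordinate complementation pattern) `b`.
Every automorphism of `Q_d` is of this form. -/
def cubeAuto {d : ℕ} (π : Equiv.Perm (Fin d)) (b : Fin d → Bool) (v : Fin d → Bool) :
    Fin d → Bool :=
  fun i => xor (v (π.symm i)) (b i)

/-- `K` is an exact copy of `H` in `Q_d`: some automorphism of `Q_d` maps `H` onto `K`. -/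
def ExactCopy {d : ℕ} (H K : Set (Fin d → Bool)) : Prop :=
  ∃ (π : Equiv.Perm (Fin d)) (b : Fin d → Bool), K = cubeAuto π b '' H

/-- The configuration in `Q_d` induced on the sub-`d`-cube of `Q_n` with varying
coordinate set `D` (with `D.card = d`) and fixed values `f` outside `D`, by a set
`S ⊆ V(Q_n)`: the varying coordinates are identified with `Fin d` in increasing order. -/
def subcubeConfig {n d : ℕ} (D : Finset (Fin n)) (hD : D.card = d)
    (f : Fin n → Bool) (S : Set (Fin n → Bool)) : Set (Fin d → Bool) :=
  {x | (fun i => if h : i ∈ D then x ((D.orderIsoOfFin hD).symm ⟨i, h⟩) else f i) ∈ S}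

/-- `G(H,d,n,S)`: the number of sub-`d`-cubes `R` of `Q_n` such that `S ∩ R` is an exact
copy of `H`.  A sub-`d`-cube is encoded as a pair `(D, f)` with `D.card = d` and `f`
normalized to be `false` on `D`; there are `C(n,d)·2^(n-d)` of them. -/
noncomputable def goodCount {d : ℕ} (H : Set (Fin d → Bool)) (n : ℕ)
    (S : Set (Fin n → Bool)) : ℕ :=
  ((Finset.univ : Finset (Finset (Fin n) × (Fin n → Bool))).filter
    (fun P => ∃ h : P.1.card = d,
      (∀ i ∈ P.1, P.2 i = false) ∧ ExactCopy H (subcubeConfig P.1 h P.2 S))).card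

/-- `ex(H,d,n)`: the maximum over `S ⊆ V(Q_n)` of the fraction of sub-`d`-cubes of `Q_n`
whose intersection with `S` is an exact copy of `H`. -/
noncomputable def exDensity {d : ℕ} (H : Set (Fin d → Bool)) (n : ℕ) : ℝ :=
  (((Finset.univ : Finset (Finset (Fin n → Bool))).sup
      (fun S => goodCount H n (S : Set (Fin n → Bool))) : ℕ) : ℝ) /
    ((n.choose d : ℝ) * 2 ^ (n - d))

/-- The perfect path `P_{d+1}` in `Q_d`: the `d+1` vertices
`∅, {1}, {1,2}, …, {1,…,d}`, whose endpoints are at Hamming distance `d`. -/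
def perfectPath (d : ℕ) : Set (Fin d → Bool) :=
  {v | ∃ k : ℕ, k ≤ d ∧ v = fun i : Fin d => decide ((i : ℕ) < k)}

namespace Stmt17

lemma mem_cubeAuto_image {d : ℕ} (π : Equiv.Perm (Fin d)) (b : Fin d → Bool)
    (H : Set (Fin d → Bool)) (v : Fin d → Bool) :
    v ∈ cubeAuto π b '' H ↔ (fun i => xor (v (π i)) (b (π i))) ∈ H := by
  constructor
  · rintro ⟨u, hu, rfl⟩
    convert hu using 1
    funext i
    simp [cubeAuto, Bool.xor_assoc]
  · intro h
    refine ⟨_, h, ?_⟩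
    funext i
    simp [cubeAuto, Bool.xor_assoc]

lemma exactCopy_of_forall {d : ℕ} (H K : Set (Fin d → Bool)) (π : Equiv.Perm (Fin d))
    (b : Fin d → Bool) (h : ∀ v, v ∈ K ↔ (fun i => xor (v (π i)) (b (π i))) ∈ H) :
    ExactCopy H K :=
  ⟨π, b, Set.ext fun v => (h v).trans (mem_cubeAuto_image π b H v).symm⟩

def prefixFun (k : ℕ) {d : ℕ} : Fin d → Bool := fun i => decide ((i : ℕ) < k)

def suffixFun (k : ℕ) {d : ℕ} : Fin d → Bool := fun i => decide (d - k ≤ (i : ℕ))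

def cycleB (d : ℕ) : Set (Fin (d+1) → Bool) :=
  {w | ∃ k ≤ d + 1, w = prefixFun k ∨ w = suffixFun k}

lemma decide_xor_decide (p q : Prop) [Decidable p] [Decidable q] :
    xor (decide p) (decide q) = decide (¬(p ↔ q)) := by
  by_cases hp : p <;> by_cases hq : q <;> simp [hp, hq]

lemma hxor_iff (a x y : Bool) : (xor a y = x) ↔ (a = xor x y) := by
  cases a <;> cases x <;> cases y <;> simp

lemma facet_exactCopy {d : ℕ} (m : Fin (d+1)) (e : Fin d ≃ {q : Fin (d+1) // q ≠ m})
    (c : Fin (d+1) → Bool) :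
    ExactCopy (perfectPath d)
      {x : Fin d → Bool |
        (fun q : Fin (d+1) => xor (if h : q = m then false else x (e.symm ⟨q, h⟩)) (c q))
          ∈ cycleB d} := by
  set M : ℕ := (m : ℕ) with hM
  have hMd : M < d + 1 := m.isLt
  set E : Fin d → ℕ := fun i => ((e i : Fin (d+1)) : ℕ) with hE
  have hElt : ∀ i, E i < d + 1 := fun i => (e i : Fin (d+1)).isLt
  have hEne : ∀ i, E i ≠ M := by
    intro i h
    exact (e i).2 (Fin.ext h)
  have hEinj : Function.Injective E := by
    intro i j h
    exact e.injective (Subtype.ext (Fin.ext h))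
  set σ : Fin d → Fin d := fun i =>
    if h : M < E i then ⟨E i - M - 1, by have := hElt i; have := i.pos; omega⟩
    else ⟨d - M + E i, by have h1 := hEne i; have := hElt i; have := hMd; omega⟩ with hσ
  have hσval : ∀ i, (σ i : ℕ) = if M < E i then E i - M - 1 else d - M + E i := by
    intro i
    by_cases h : M < E i <;> simp [hσ, h]
  have hσinj : Function.Injective σ := by
    intro i j hij
    have h1 := hElt i; have h2 := hElt j; have h3 := hEne i; have h4 := hEne j
    have hv : (σ i : ℕ) = (σ j : ℕ) := by rw [hij]
    rw [hσval, hσval] at hv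
    apply hEinj
    by_cases hi : M < E i <;> by_cases hj : M < E j <;> simp [hi, hj] at hv <;> omega
  have hσbij := Finite.injective_iff_bijective.mp hσinj
  set τ : Equiv.Perm (Fin d) := Equiv.ofBijective σ hσbij with hτ
  have hτa : ∀ i, τ i = σ i := fun _ => rfl
  set b : Fin d → Bool := fun i =>
    xor (c ((e i : Fin (d+1)))) (xor (c m) (decide (M < E i))) with hb
  apply exactCopy_of_forall _ _ τ.symm b
  intro v
  have hRHS : ((fun i => xor (v (τ.symm i)) (b (τ.symm i))) ∈ perfectPath d)
      ↔ ∃ k ≤ d, ∀ i, v i = xor (decide ((σ i : ℕ) < k)) (b i) := by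
    constructor
    · rintro ⟨k, hk, hfe⟩
      refine ⟨k, hk, fun i => ?_⟩
      have h2 := congrFun hfe (τ i)
      simp only [Equiv.symm_apply_apply] at h2
      rw [hxor_iff] at h2
      rw [h2, hτa]
    · rintro ⟨k, hk, hv⟩
      refine ⟨k, hk, ?_⟩
      funext j
      have h1 : σ (τ.symm j) = j := by rw [← hτa]; exact τ.apply_symm_apply j
      rw [hv (τ.symm j), h1]
      simp [Bool.xor_assoc]
  rw [Set.mem_setOf_eq, hRHS]
  have hWe : ∀ (x : Fin d → Bool) (i : Fin d),
      (if h : ((e i : Fin (d+1))) = m then false else x (e.symm ⟨(e i : Fin (d+1)), h⟩)) = x i := by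
    intro x i
    rw [dif_neg (e i).2, Subtype.coe_eta, Equiv.symm_apply_apply]
  constructor
  · rintro ⟨k, hk, hcase | hcase⟩
    · -- prefix case
      have hm : c m = decide (M < k) := by
        have h0 := congrFun hcase m
        simpa [prefixFun, hM] using h0
      have hvi : ∀ i, v i = xor (decide (E i < k)) (c ((e i : Fin (d+1)))) := by
        intro i
        have h2 := congrFun hcase ((e i : Fin (d+1)))
        simp only [hWe] at h2
        rw [hxor_iff] at h2
        exact h2
      refine ⟨if M < k then k - M - 1 else d - M + k, by split_ifs <;> omega, fun i => ?_⟩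
      have hne := hEne i; have hlt := hElt i
      rw [hvi i]
      simp only [hb]
      rw [hm, hσval i]
      split_ifs with h1 h2 h2 <;>
        (cases hc : c ((e i : Fin (d+1))) <;>
          simp only [Bool.false_xor, Bool.true_xor, Bool.xor_false, Bool.xor_true] <;>
          simp only [← decide_not, decide_xor_decide, decide_eq_decide] <;>
          omega)
    · -- suffix case
      have hm : c m = decide (d + 1 - k ≤ M) := by
        have h0 := congrFun hcase m
        simpa [suffixFun, hM] using h0
      have hvi : ∀ i, v i = xor (decide (d + 1 - k ≤ E i)) (c ((e i : Fin (d+1)))) := by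
        intro i
        have h2 := congrFun hcase ((e i : Fin (d+1)))
        simp only [hWe] at h2
        rw [hxor_iff] at h2
        exact h2
      refine ⟨if d + 1 - k ≤ M then (d - M) + (d + 1 - k) else d - M - k,
        by split_ifs <;> omega, fun i => ?_⟩
      have hne := hEne i; have hlt := hElt i
      rw [hvi i]
      simp only [hb]
      rw [hm, hσval i]
      split_ifs with h1 h2 h2 <;>
        (cases hc : c ((e i : Fin (d+1))) <;>
          simp only [Bool.false_xor, Bool.true_xor, Bool.xor_false, Bool.xor_true] <;>
          simp only [← decide_not, decide_xor_decide, decide_eq_decide] <;>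
          omega)
  · rintro ⟨k', hk', hv⟩
    cases hεv : c m with
    | false =>
      by_cases hsml : k' ≤ d - M
      · refine ⟨d - M - k', by omega, Or.inr ?_⟩
        funext q
        by_cases hq : q = m
        · subst hq
          have hP : ¬ (d + 1 - (d - M - k') ≤ (q : ℕ)) := by rw [← hM]; omega
          simp [suffixFun, hεv, hP]
        · obtain ⟨i, hi⟩ := e.surjective ⟨q, hq⟩
          have hiq : ((e i : Fin (d+1))) = q := congrArg Subtype.val hi
          have hqE : E i = (q : ℕ) := congrArg Fin.val hiq
          have hne := hEne i; have hlt := hElt i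
          simp only [dif_neg hq, ← hi, Equiv.symm_apply_apply]
          rw [hv i]
          simp only [hb, hσval i, hεv, hiq, suffixFun]
          rw [← hqE]
          split_ifs with h1 <;>
            (cases hc : c q <;>
              simp only [Bool.false_xor, Bool.true_xor, Bool.xor_false, Bool.xor_true] <;>
              simp only [← decide_not, decide_xor_decide, decide_eq_decide] <;>
              omega)
      · refine ⟨k' - (d - M), by omega, Or.inl ?_⟩
        funext q
        by_cases hq : q = m
        · subst hq
          have hP : ¬ ((q : ℕ) < k' - (d - M)) := by rw [← hM]; omega
          simp [prefixFun, hεv, hP]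
        · obtain ⟨i, hi⟩ := e.surjective ⟨q, hq⟩
          have hiq : ((e i : Fin (d+1))) = q := congrArg Subtype.val hi
          have hqE : E i = (q : ℕ) := congrArg Fin.val hiq
          have hne := hEne i; have hlt := hElt i
          simp only [dif_neg hq, ← hi, Equiv.symm_apply_apply]
          rw [hv i]
          simp only [hb, hσval i, hεv, hiq, prefixFun]
          rw [← hqE]
          split_ifs with h1 <;>
            (cases hc : c q <;>
              simp only [Bool.false_xor, Bool.true_xor, Bool.xor_false, Bool.xor_true] <;>
              simp only [← decide_not, decide_xor_decide, decide_eq_decide] <;>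
              omega)
    | true =>
      by_cases hsml : k' ≤ d - M
      · refine ⟨M + 1 + k', by omega, Or.inl ?_⟩
        funext q
        by_cases hq : q = m
        · subst hq
          have hP : ((q : ℕ) < M + 1 + k') := by rw [← hM]; omega
          simp [prefixFun, hεv, hP]
        · obtain ⟨i, hi⟩ := e.surjective ⟨q, hq⟩
          have hiq : ((e i : Fin (d+1))) = q := congrArg Subtype.val hi
          have hqE : E i = (q : ℕ) := congrArg Fin.val hiq
          have hne := hEne i; have hlt := hElt i
          simp only [dif_neg hq, ← hi, Equiv.symm_apply_apply]
          rw [hv i]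
          simp only [hb, hσval i, hεv, hiq, prefixFun]
          rw [← hqE]
          split_ifs with h1 <;>
            (cases hc : c q <;>
              simp only [Bool.false_xor, Bool.true_xor, Bool.xor_false, Bool.xor_true] <;>
              simp only [← decide_not, decide_xor_decide, decide_eq_decide] <;>
              omega)
      · refine ⟨d + 1 - (k' - (d - M)), by omega, Or.inr ?_⟩
        funext q
        by_cases hq : q = m
        · subst hq
          have hP : (d + 1 - (d + 1 - (k' - (d - M))) ≤ (q : ℕ)) := by rw [← hM]; omega
          simp [suffixFun, hεv, hP]
        · obtain ⟨i, hi⟩ := e.surjective ⟨q, hq⟩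
          have hiq : ((e i : Fin (d+1))) = q := congrArg Subtype.val hi
          have hqE : E i = (q : ℕ) := congrArg Fin.val hiq
          have hne := hEne i; have hlt := hElt i
          simp only [dif_neg hq, ← hi, Equiv.symm_apply_apply]
          rw [hv i]
          simp only [hb, hσval i, hεv, hiq, suffixFun]
          rw [← hqE]
          split_ifs with h1 <;>
            (cases hc : c q <;>
              simp only [Bool.false_xor, Bool.true_xor, Bool.xor_false, Bool.xor_true] <;>
              simp only [← decide_not, decide_xor_decide, decide_eq_decide] <;>
              omega)

/-! ### The construction in `Q_n` -/

def res (d n : ℕ) (i : Fin n) : Fin (d+1) := ⟨(i : ℕ) % (d+1), Nat.mod_lt _ (Nat.succ_pos d)⟩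

noncomputable def pat (d n : ℕ) (v : Fin n → Bool) : Fin (d+1) → Bool :=
  fun q => decide (Odd ((Finset.univ.filter (fun i => res d n i = q ∧ v i = true)).card))

def Scons (d n : ℕ) : Set (Fin n → Bool) := {v | pat d n v ∈ cycleB d}

def aval (d n : ℕ) (m : Fin (d+1)) (t : Fin d → Fin (n/(d+1))) (j : Fin d) : Fin n :=
  ⟨(d+1) * (t j : ℕ) + (m.succAbove j : ℕ), by
    have h1 : (d+1) * ((t j : ℕ) + 1) ≤ (d+1) * (n/(d+1)) :=
      Nat.mul_le_mul_left _ (t j).isLt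
    have h2 : (n/(d+1)) * (d+1) ≤ n := Nat.div_mul_le_self n (d+1)
    have h3 : (m.succAbove j : ℕ) < d + 1 := (m.succAbove j).isLt
    have h4 : (d+1) * ((t j : ℕ) + 1) = (d+1) * (t j : ℕ) + (d+1) := by ring
    have h5 : (n/(d+1)) * (d+1) = (d+1) * (n/(d+1)) := Nat.mul_comm _ _
    omega⟩

lemma ares (d n : ℕ) (m : Fin (d+1)) (t : Fin d → Fin (n/(d+1))) (j : Fin d) :
    res d n (aval d n m t j) = m.succAbove j := by
  apply Fin.ext
  show ((d+1) * (t j : ℕ) + (m.succAbove j : ℕ)) % (d+1) = _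
  rw [Nat.mul_add_mod]
  exact Nat.mod_eq_of_lt (m.succAbove j).isLt

lemma aval_inj (d n : ℕ) (m : Fin (d+1)) (t : Fin d → Fin (n/(d+1))) :
    Function.Injective (aval d n m t) := by
  intro j j' h
  apply Fin.succAbove_right_injective (p := m)
  rw [← ares d n m t j, ← ares d n m t j', h]

def asetD (d n : ℕ) (m : Fin (d+1)) (t : Fin d → Fin (n/(d+1))) : Finset (Fin n) :=
  Finset.image (aval d n m t) Finset.univ

lemma mem_aval (d n : ℕ) (m : Fin (d+1)) (t : Fin d → Fin (n/(d+1))) (j : Fin d) :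
    aval d n m t j ∈ asetD d n m t :=
  Finset.mem_image_of_mem _ (Finset.mem_univ j)

lemma aset_card (d n : ℕ) (m : Fin (d+1)) (t : Fin d → Fin (n/(d+1))) :
    (asetD d n m t).card = d := by
  rw [asetD, Finset.card_image_of_injective _ (aval_inj d n m t), Finset.card_univ,
    Fintype.card_fin]

noncomputable def idxD (d n : ℕ) (m : Fin (d+1)) (t : Fin d → Fin (n/(d+1))) (j : Fin d) :
    Fin d :=
  ((asetD d n m t).orderIsoOfFin (aset_card d n m t)).symm ⟨aval d n m t j, mem_aval d n m t j⟩

lemma idxD_inj (d n : ℕ) (m : Fin (d+1)) (t : Fin d → Fin (n/(d+1))) :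
    Function.Injective (idxD d n m t) := by
  intro j j' h
  apply aval_inj d n m t
  have h2 := ((asetD d n m t).orderIsoOfFin (aset_card d n m t)).toEquiv.symm.injective h
  exact congrArg Subtype.val h2

noncomputable def eIdx (d n : ℕ) (m : Fin (d+1)) (t : Fin d → Fin (n/(d+1))) :
    Equiv.Perm (Fin d) :=
  Equiv.ofBijective _ (Finite.injective_iff_bijective.mp (idxD_inj d n m t))

noncomputable def eSucc (d : ℕ) (m : Fin (d+1)) : Fin d ≃ {q : Fin (d+1) // q ≠ m} :=
  Equiv.ofBijective (fun j => ⟨m.succAbove j, Fin.succAbove_ne m j⟩) (by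
    rw [Fintype.bijective_iff_injective_and_card]
    constructor
    · intro a b h
      exact Fin.succAbove_right_injective (congrArg Subtype.val h)
    · simp [Fintype.card_subtype_compl, Fintype.card_subtype_eq])

noncomputable def eCons (d n : ℕ) (m : Fin (d+1)) (t : Fin d → Fin (n/(d+1))) :
    Fin d ≃ {q : Fin (d+1) // q ≠ m} :=
  (eIdx d n m t).symm.trans (eSucc d m)

noncomputable def cCons (d n : ℕ) (D : Finset (Fin n)) (f : Fin n → Bool) :
    Fin (d+1) → Bool :=
  fun q => decide (Odd ((Finset.univ.filter
    (fun i => res d n i = q ∧ i ∉ D ∧ f i = true)).card))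

lemma pat_ext (d n : ℕ) (m : Fin (d+1)) (t : Fin d → Fin (n/(d+1))) (f : Fin n → Bool)
    (x : Fin d → Bool) :
    pat d n (fun i => if h : i ∈ asetD d n m t then
        x (((asetD d n m t).orderIsoOfFin (aset_card d n m t)).symm ⟨i, h⟩) else f i)
    = fun q => xor (if h : q = m then false else x ((eCons d n m t).symm ⟨q, h⟩))
        (cCons d n (asetD d n m t) f q) := by
  classical
  funext q
  set F : Fin n → Bool := fun i => if h : i ∈ asetD d n m t then
      x (((asetD d n m t).orderIsoOfFin (aset_card d n m t)).symm ⟨i, h⟩) else f i with hF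
  have hFnot : ∀ i, i ∉ asetD d n m t → F i = f i := fun i hi => dif_neg hi
  have hcard_split : (Finset.univ.filter (fun i => res d n i = q ∧ F i = true)).card
      = (Finset.univ.filter (fun i => res d n i = q ∧ i ∉ asetD d n m t ∧ f i = true)).card
      + (Finset.univ.filter (fun i => res d n i = q ∧ i ∈ asetD d n m t ∧ F i = true)).card := by
    rw [← Finset.card_union_of_disjoint (by
      rw [Finset.disjoint_left]
      intro i hi1 hi2
      simp only [Finset.mem_filter] at hi1 hi2
      exact hi1.2.2.1 hi2.2.2.1)]
    congr 1
    ext i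
    simp only [Finset.mem_filter, Finset.mem_union, Finset.mem_univ, true_and]
    by_cases hiD : i ∈ asetD d n m t
    · simp [hiD]
    · simp [hiD, hFnot i hiD]
  by_cases hq : q = m
  · have hA2 : (Finset.univ.filter (fun i => res d n i = q ∧ i ∈ asetD d n m t ∧ F i = true))
        = ∅ := by
      rw [Finset.filter_eq_empty_iff]
      intro i _
      rintro ⟨hres, hiD, -⟩
      obtain ⟨j, -, rfl⟩ := Finset.mem_image.mp hiD
      rw [ares] at hres
      exact Fin.succAbove_ne m j (hres.trans hq)
    simp only [pat, cCons, dif_pos hq, Bool.false_xor]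
    rw [hcard_split, hA2]
    simp
  · set j0 := (eSucc d m).symm ⟨q, hq⟩ with hj0def
    have hj0 : m.succAbove j0 = q := by
      have := (eSucc d m).apply_symm_apply ⟨q, hq⟩
      exact congrArg Subtype.val this
    have hFv : ∀ j, F (aval d n m t j) = x (idxD d n m t j) := by
      intro j
      rw [hF]
      exact dif_pos (mem_aval d n m t j)
    have hA2 : (Finset.univ.filter (fun i => res d n i = q ∧ i ∈ asetD d n m t ∧ F i = true))
        = (if x (idxD d n m t j0) = true then {aval d n m t j0} else ∅) := by
      ext i
      simp only [Finset.mem_filter, Finset.mem_univ, true_and]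
      constructor
      · rintro ⟨hres, hiD, hFI⟩
        obtain ⟨j, -, rfl⟩ := Finset.mem_image.mp hiD
        rw [ares] at hres
        have hjj : j = j0 := Fin.succAbove_right_injective (p := m) (by rw [hres, hj0])
        rw [hjj] at hFI ⊢
        rw [hFv j0] at hFI
        rw [if_pos hFI]
        exact Finset.mem_singleton_self _
      · intro hi
        by_cases hx : x (idxD d n m t j0) = true
        · rw [if_pos hx, Finset.mem_singleton] at hi
          subst hi
          exact ⟨by rw [ares, hj0], mem_aval d n m t j0, by rw [hFv j0]; exact hx⟩
        · rw [if_neg hx] at hi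
          exact absurd hi (Finset.notMem_empty _)
    have hcA2 : (Finset.univ.filter
        (fun i => res d n i = q ∧ i ∈ asetD d n m t ∧ F i = true)).card
        = if x (idxD d n m t j0) = true then 1 else 0 := by
      rw [hA2]; split_ifs <;> simp
    have hesymm : (eCons d n m t).symm ⟨q, hq⟩ = idxD d n m t j0 := rfl
    simp only [pat, cCons, dif_neg hq]
    rw [hcard_split, hcA2, hesymm]
    cases hx : x (idxD d n m t j0)
    · norm_num [Bool.false_xor]
    · norm_num [Nat.odd_add_one, Bool.true_xor]
      simp only [← Nat.not_odd_iff_even, decide_not]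

lemma construction_exactCopy (d n : ℕ) (m : Fin (d+1)) (t : Fin d → Fin (n/(d+1)))
    (f : Fin n → Bool) :
    ExactCopy (perfectPath d)
      (subcubeConfig (asetD d n m t) (aset_card d n m t) f (Scons d n)) := by
  have h := facet_exactCopy m (eCons d n m t) (cCons d n (asetD d n m t) f)
  convert h using 1
  ext x
  simp only [subcubeConfig, Set.mem_setOf_eq, Scons]
  rw [pat_ext]

/-! ### Counting -/

lemma card_forall_false {n : ℕ} (D : Finset (Fin n)) :
    (Finset.univ.filter (fun f : Fin n → Bool => ∀ i ∈ D, f i = false)).card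
      = 2 ^ (n - D.card) := by
  classical
  rw [← Fintype.card_subtype]
  have e : {f : Fin n → Bool // ∀ i ∈ D, f i = false} ≃ ({i : Fin n // i ∈ Dᶜ} → Bool) :=
    { toFun := fun f i => f.1 i.1
      invFun := fun g => ⟨fun i => if h : i ∈ Dᶜ then g ⟨i, h⟩ else false, by
        intro i hi
        simp [hi]⟩
      left_inv := by
        intro f
        apply Subtype.ext
        funext i
        by_cases h : i ∈ Dᶜ
        · simp [h]
        · simp [h, f.2 i (by simpa using h)]
      right_inv := by
        intro g
        funext i
        simp [i.2] }
  rw [Fintype.card_congr e, Fintype.card_fun, Fintype.card_coe, Finset.card_compl,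
    Fintype.card_fin, Fintype.card_bool]

lemma asetD_injective (d n : ℕ) :
    Function.Injective (fun p : Fin (d+1) × (Fin d → Fin (n/(d+1))) => asetD d n p.1 p.2) := by
  intro p p' h
  obtain ⟨m, t⟩ := p
  obtain ⟨m', t'⟩ := p'
  simp only at h
  have hm : m = m' := by
    by_contra hne
    obtain ⟨j, hj⟩ := Fin.exists_succAbove_eq (Ne.symm hne)
    have hmem : aval d n m t j ∈ asetD d n m' t' := by rw [← h]; exact mem_aval d n m t j
    obtain ⟨j', -, hj'⟩ := Finset.mem_image.mp hmem
    have hres : res d n (aval d n m' t' j') = res d n (aval d n m t j) := by rw [hj']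
    rw [ares, ares, hj] at hres
    exact Fin.succAbove_ne m' j' hres
  subst hm
  have ht : t = t' := by
    funext j
    have hmem : aval d n m t j ∈ asetD d n m t' := by rw [← h]; exact mem_aval d n m t j
    obtain ⟨j', -, hj'⟩ := Finset.mem_image.mp hmem
    have hres : m.succAbove j' = m.succAbove j := by
      have h2 := congrArg (res d n) hj'
      rwa [ares, ares] at h2
    have hjj : j' = j := Fin.succAbove_right_injective hres
    rw [hjj] at hj'
    have hval := congrArg Fin.val hj'
    simp only [aval] at hval
    have h2 : (d+1) * (t' j : ℕ) = (d+1) * (t j : ℕ) := by omega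
    have h3 : (t' j : ℕ) = (t j : ℕ) := Nat.eq_of_mul_eq_mul_left (Nat.succ_pos d) h2
    exact (Fin.ext h3).symm
  rw [ht]

lemma goodCount_lower (d n : ℕ) :
    (d+1) * (n/(d+1))^d * 2^(n-d) ≤ goodCount (perfectPath d) n (Scons d n) := by
  classical
  set Dset : Finset (Finset (Fin n)) :=
    Finset.image (fun p : Fin (d+1) × (Fin d → Fin (n/(d+1))) => asetD d n p.1 p.2)
      Finset.univ with hDset
  set E := (Finset.univ : Finset (Finset (Fin n) × (Fin n → Bool))).filter
    (fun P => P.1 ∈ Dset ∧ ∀ i ∈ P.1, P.2 i = false) with hE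
  have hsub : E ⊆ (Finset.univ : Finset (Finset (Fin n) × (Fin n → Bool))).filter
      (fun P => ∃ h : P.1.card = d,
        (∀ i ∈ P.1, P.2 i = false) ∧
          ExactCopy (perfectPath d) (subcubeConfig P.1 h P.2 (Scons d n))) := by
    intro P hP
    obtain ⟨D1, f1⟩ := P
    rw [hE, Finset.mem_filter] at hP
    obtain ⟨-, hD, hf⟩ := hP
    rw [hDset, Finset.mem_image] at hD
    obtain ⟨p, -, hp⟩ := hD
    rw [Finset.mem_filter]
    refine ⟨Finset.mem_univ _, ?_⟩
    simp only at hf ⊢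
    subst hp
    exact ⟨aset_card d n p.1 p.2, hf, construction_exactCopy d n p.1 p.2 f1⟩
  have hDsetcard : Dset.card = (d+1) * (n/(d+1))^d := by
    rw [hDset, Finset.card_image_of_injective _ (asetD_injective d n), Finset.card_univ]
    simp [Fintype.card_fun]
  have hcardE : E.card = Dset.card * 2^(n-d) := by
    rw [hE, Finset.card_eq_sum_card_fiberwise (f := Prod.fst) (t := Dset)
      (fun P hP => (Finset.mem_filter.mp hP).2.1)]
    have hfib : ∀ D ∈ Dset,
        (Finset.filter (fun P : Finset (Fin n) × (Fin n → Bool) => P.1 = D)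
          (Finset.filter (fun P => P.1 ∈ Dset ∧ ∀ i ∈ P.1, P.2 i = false) Finset.univ)).card
        = 2^(n-d) := by
      intro D hD
      have hDcard : D.card = d := by
        rw [hDset, Finset.mem_image] at hD
        obtain ⟨p, -, hp⟩ := hD
        rw [← hp]
        exact aset_card d n p.1 p.2
      rw [← hDcard, ← card_forall_false D]
      apply Finset.card_bij (fun P _ => P.2)
      · intro P hP
        simp only [Finset.mem_filter, Finset.mem_univ, true_and] at hP ⊢
        obtain ⟨⟨-, hff⟩, h1⟩ := hP
        exact fun i hi => hff i (h1 ▸ hi)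
      · intro P hP Q hQ hPQ
        simp only [Finset.mem_filter] at hP hQ
        exact Prod.ext (hP.2.trans hQ.2.symm) hPQ
      · intro g hg
        simp only [Finset.mem_filter, Finset.mem_univ, true_and] at hg
        exact ⟨(D, g), Finset.mem_filter.mpr
          ⟨Finset.mem_filter.mpr ⟨Finset.mem_univ _, hD, hg⟩, rfl⟩, rfl⟩
    rw [Finset.sum_congr rfl hfib, Finset.sum_const, smul_eq_mul]
  calc (d+1) * (n/(d+1))^d * 2^(n-d) = Dset.card * 2^(n-d) := by rw [hDsetcard]
    _ = E.card := hcardE.symm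
    _ ≤ _ := Finset.card_le_card hsub

/-! ### Slices of the cube and monotonicity -/

lemma compl_card (n : ℕ) (j : Fin (n+1)) : ({j}ᶜ : Finset (Fin (n+1))).card = n := by
  rw [Finset.card_compl, Finset.card_singleton, Fintype.card_fin]
  omega

noncomputable def jemb (n : ℕ) (j : Fin (n+1)) (k : Fin n) : Fin (n+1) :=
  (({j}ᶜ : Finset (Fin (n+1))).orderIsoOfFin (compl_card n j) k : Fin (n+1))

lemma jemb_strictMono (n : ℕ) (j : Fin (n+1)) : StrictMono (jemb n j) := by
  intro k l h
  exact (({j}ᶜ : Finset (Fin (n+1))).orderIsoOfFin (compl_card n j)).strictMono h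

lemma jemb_inj (n : ℕ) (j : Fin (n+1)) : Function.Injective (jemb n j) :=
  (jemb_strictMono n j).injective

lemma jemb_ne (n : ℕ) (j : Fin (n+1)) (k : Fin n) : jemb n j k ≠ j := by
  have h := (({j}ᶜ : Finset (Fin (n+1))).orderIsoOfFin (compl_card n j) k).2
  rw [Finset.mem_compl, Finset.mem_singleton] at h
  exact h

lemma jemb_surj (n : ℕ) (j : Fin (n+1)) (i : Fin (n+1)) (hi : i ≠ j) :
    ∃ k, jemb n j k = i := by
  have hmem : i ∈ ({j}ᶜ : Finset (Fin (n+1))) := by simpa [Finset.mem_compl] using hi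
  refine ⟨(({j}ᶜ : Finset (Fin (n+1))).orderIsoOfFin (compl_card n j)).symm ⟨i, hmem⟩, ?_⟩
  rw [jemb]
  rw [OrderIso.apply_symm_apply]

def sliceSet (n : ℕ) (S : Set (Fin (n+1) → Bool)) (j : Fin (n+1)) (bb : Bool) :
    Set (Fin n → Bool) :=
  subcubeConfig ({j}ᶜ : Finset (Fin (n+1))) (compl_card n j) (fun _ => bb) S

noncomputable def sliceD (n : ℕ) (j : Fin (n+1)) (D : Finset (Fin (n+1))) : Finset (Fin n) :=
  Finset.univ.filter (fun k => jemb n j k ∈ D)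

lemma mem_sliceD (n : ℕ) (j : Fin (n+1)) (D : Finset (Fin (n+1))) (k : Fin n) :
    k ∈ sliceD n j D ↔ jemb n j k ∈ D := by
  simp [sliceD]

lemma sliceD_card {n d : ℕ} {j : Fin (n+1)} {D : Finset (Fin (n+1))} (hD : D.card = d)
    (hj : j ∉ D) : (sliceD n j D).card = d := by
  rw [← hD]
  apply Finset.card_bij (fun k _ => jemb n j k)
  · intro k hk
    exact (mem_sliceD n j D k).mp hk
  · intro k _ l _ h
    exact jemb_inj n j h
  · intro i hi
    obtain ⟨k, hk⟩ := jemb_surj n j i (fun h => hj (h ▸ hi))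
    exact ⟨k, (mem_sliceD n j D k).mpr (hk ▸ hi), hk⟩

lemma sliceD_image {n : ℕ} {j : Fin (n+1)} {D : Finset (Fin (n+1))} (hj : j ∉ D) :
    Finset.image (jemb n j) (sliceD n j D) = D := by
  ext i
  simp only [Finset.mem_image]
  constructor
  · rintro ⟨k, hk, rfl⟩
    exact (mem_sliceD n j D k).mp hk
  · intro hi
    obtain ⟨k, hk⟩ := jemb_surj n j i (fun h => hj (h ▸ hi))
    exact ⟨k, (mem_sliceD n j D k).mpr (hk ▸ hi), hk⟩

lemma jemb_ordEmb {n d : ℕ} {j : Fin (n+1)} {D : Finset (Fin (n+1))} (hD : D.card = d)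
    (hj : j ∉ D) (k : Fin d) :
    jemb n j (((sliceD n j D).orderIsoOfFin (sliceD_card hD hj)) k : Fin n)
      = (D.orderIsoOfFin hD k : Fin (n+1)) := by
  have hmono : StrictMono (fun k : Fin d =>
      jemb n j (((sliceD n j D).orderIsoOfFin (sliceD_card hD hj)) k : Fin n)) := by
    intro a b h
    exact jemb_strictMono n j (((sliceD n j D).orderIsoOfFin (sliceD_card hD hj)).strictMono h)
  have hfs : ∀ k : Fin d,
      jemb n j (((sliceD n j D).orderIsoOfFin (sliceD_card hD hj)) k : Fin n) ∈ D := by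
    intro k
    have := (((sliceD n j D).orderIsoOfFin (sliceD_card hD hj)) k).2
    exact (mem_sliceD n j D _).mp this
  have := Finset.orderEmbOfFin_unique hD hfs hmono
  have h2 := congrFun this k
  rw [h2]
  rw [Finset.coe_orderIsoOfFin_apply]

lemma slice_config {n d : ℕ} (S : Set (Fin (n+1) → Bool)) (D : Finset (Fin (n+1)))
    (hD : D.card = d) (f : Fin (n+1) → Bool) (j : Fin (n+1)) (hj : j ∉ D) :
    subcubeConfig D hD f S =
      subcubeConfig (sliceD n j D) (sliceD_card hD hj) (fun k => f (jemb n j k))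
        (sliceSet n S j (f j)) := by
  ext x
  simp only [subcubeConfig, sliceSet, Set.mem_setOf_eq]
  apply Eq.to_iff
  congr 1
  funext i
  by_cases hij : i = j
  · have hiD' : i ∉ D := by rw [hij]; exact hj
    have hic' : i ∉ ({j}ᶜ : Finset (Fin (n+1))) := by simp [hij]
    rw [dif_neg hiD', dif_neg hic']
    simp [hij]
  · have hic : i ∈ ({j}ᶜ : Finset (Fin (n+1))) := by simpa [Finset.mem_compl] using hij
    rw [dif_pos hic]
    set k' : Fin n :=
      ((({j}ᶜ : Finset (Fin (n+1))).orderIsoOfFin (compl_card n j)).symm ⟨i, hic⟩) with hk'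
    have hjk' : jemb n j k' = i := by
      rw [jemb, hk', OrderIso.apply_symm_apply]
    by_cases hiD : i ∈ D
    · have hk'mem : k' ∈ sliceD n j D := (mem_sliceD n j D k').mpr (hjk' ▸ hiD)
      simp only [dif_pos hk'mem, dif_pos hiD]
      congr 1
      set a := (D.orderIsoOfFin hD).symm ⟨i, hiD⟩ with ha
      have h1 : jemb n j (((sliceD n j D).orderIsoOfFin (sliceD_card hD hj)) a : Fin n)
          = i := by
        rw [jemb_ordEmb hD hj a, ha, OrderIso.apply_symm_apply]
      have h2 : (((sliceD n j D).orderIsoOfFin (sliceD_card hD hj)) a : Fin n) = k' :=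
        jemb_inj n j (by rw [h1, hjk'])
      have h3 : ((sliceD n j D).orderIsoOfFin (sliceD_card hD hj)) a = ⟨k', hk'mem⟩ :=
        Subtype.ext h2
      rw [← h3, OrderIso.symm_apply_apply]
    · have hk'mem : k' ∉ sliceD n j D := by
        rw [mem_sliceD, hjk']
        exact hiD
      simp only [dif_neg hk'mem, dif_neg hiD]
      rw [hjk']

lemma key_count {d : ℕ} (H : Set (Fin d → Bool)) (n : ℕ) (S : Set (Fin (n+1) → Bool)) :
    goodCount H (n+1) S * (n + 1 - d) ≤
      ∑ jb : Fin (n+1) × Bool, goodCount H n (sliceSet n S jb.1 jb.2) := by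
  classical
  set G := (Finset.univ : Finset (Finset (Fin (n+1)) × (Fin (n+1) → Bool))).filter
    (fun P => ∃ h : P.1.card = d,
      (∀ i ∈ P.1, P.2 i = false) ∧ ExactCopy H (subcubeConfig P.1 h P.2 S)) with hG
  have hGC : goodCount H (n+1) S = G.card := rfl
  set dom := (G ×ˢ (Finset.univ : Finset (Fin (n+1)))).filter (fun z => z.2 ∉ z.1.1) with hdom
  -- cardinality of the domain
  have hdomcard : dom.card = G.card * (n + 1 - d) := by
    rw [hdom, Finset.card_eq_sum_card_fiberwise (f := Prod.fst) (t := G)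
      (fun z hz => (Finset.mem_product.mp (Finset.mem_filter.mp hz).1).1)]
    have hfib : ∀ P ∈ G,
        (Finset.filter (fun z : (Finset (Fin (n+1)) × (Fin (n+1) → Bool)) × Fin (n+1) =>
          z.1 = P) ((G ×ˢ Finset.univ).filter (fun z => z.2 ∉ z.1.1))).card = n + 1 - d := by
      intro P hP
      have hPcard : P.1.card = d := by
        rw [hG, Finset.mem_filter] at hP
        obtain ⟨h, -⟩ := hP.2
        exact h
      have : (P.1ᶜ : Finset (Fin (n+1))).card = n + 1 - d := by
        rw [Finset.card_compl, Fintype.card_fin, hPcard]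
      rw [← this]
      apply Finset.card_bij (fun z _ => z.2)
      · intro z hz
        simp only [Finset.mem_filter] at hz
        rw [Finset.mem_compl, ← hz.2]
        exact hz.1.2
      · intro z hz w hw h
        simp only [Finset.mem_filter] at hz hw
        exact Prod.ext (hz.2.trans hw.2.symm) h
      · intro i hi
        rw [Finset.mem_compl] at hi
        exact ⟨(P, i), Finset.mem_filter.mpr
          ⟨Finset.mem_filter.mpr ⟨Finset.mem_product.mpr ⟨hP, Finset.mem_univ _⟩, hi⟩, rfl⟩, rfl⟩
    rw [Finset.sum_congr rfl hfib, Finset.sum_const, smul_eq_mul]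
  -- the codomain
  set cod := (Finset.univ : Finset ((Fin (n+1) × Bool) × (Finset (Fin n) × (Fin n → Bool)))).filter
    (fun z => ∃ h : z.2.1.card = d,
      (∀ i ∈ z.2.1, z.2.2 i = false) ∧
        ExactCopy H (subcubeConfig z.2.1 h z.2.2 (sliceSet n S z.1.1 z.1.2))) with hcod
  have hcodcard : cod.card = ∑ jb : Fin (n+1) × Bool, goodCount H n (sliceSet n S jb.1 jb.2) := by
    rw [hcod, Finset.card_eq_sum_card_fiberwise (f := Prod.fst)
      (t := (Finset.univ : Finset (Fin (n+1) × Bool))) (fun z _ => Finset.mem_univ _)]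
    apply Finset.sum_congr rfl
    intro jb _
    rw [goodCount]
    apply Finset.card_bij (fun z _ => z.2)
    · intro z hz
      simp only [Finset.mem_filter, Finset.mem_univ, true_and] at hz ⊢
      rw [← hz.2]
      exact hz.1
    · intro z hz w hw h
      simp only [Finset.mem_filter] at hz hw
      exact Prod.ext (hz.2.trans hw.2.symm) h
    · intro P hP
      simp only [Finset.mem_filter, Finset.mem_univ, true_and] at hP
      exact ⟨(jb, P), Finset.mem_filter.mpr
        ⟨Finset.mem_filter.mpr ⟨Finset.mem_univ _, hP⟩, rfl⟩, rfl⟩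
  -- the injection
  rw [hGC, ← hdomcard, ← hcodcard]
  apply Finset.card_le_card_of_injOn
    (fun z => ((z.2, z.1.2 z.2), (sliceD n z.2 z.1.1, fun k => z.1.2 (jemb n z.2 k))))
  · -- maps into cod
    intro z hz
    rw [hdom, Finset.mem_coe, Finset.mem_filter] at hz
    obtain ⟨hzG, hznot⟩ := hz
    have hzG2 := (Finset.mem_product.mp hzG).1
    rw [hG, Finset.mem_filter] at hzG2
    obtain ⟨-, hcard, hff, hEC⟩ := hzG2
    rw [hcod, Finset.mem_coe, Finset.mem_filter]
    refine ⟨Finset.mem_univ _, sliceD_card hcard hznot, ?_, ?_⟩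
    · intro k hk
      exact hff _ ((mem_sliceD n z.2 z.1.1 k).mp hk)
    · rw [← slice_config S z.1.1 hcard z.1.2 z.2 hznot]
      exact hEC
  · -- injective on dom
    intro z hz w hw h
    simp only [Prod.mk.injEq] at h
    obtain ⟨⟨hj, hfj⟩, hDs, hfs⟩ := h
    rw [hdom, Finset.coe_filter] at hz hw
    simp only [Set.mem_setOf_eq] at hz hw
    have hzj : z.2 ∉ z.1.1 := hz.2
    have hwj : w.2 ∉ w.1.1 := hw.2
    have hD : z.1.1 = w.1.1 := by
      rw [hj] at hDs
      rw [← sliceD_image hzj, ← sliceD_image hwj, hj, hDs]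
    have hf : z.1.2 = w.1.2 := by
      funext i
      by_cases hij : i = z.2
      · rw [hij, hfj, hj]
      · obtain ⟨k, hk⟩ := jemb_surj n z.2 i hij
        have := congrFun hfs k
        rw [← hk, this, hj]
    have hzw1 : z.1 = w.1 := Prod.ext hD hf
    exact Prod.ext hzw1 hj


/-! ### The maximum density and its monotonicity -/

noncomputable def Msup {d : ℕ} (H : Set (Fin d → Bool)) (n : ℕ) : ℕ :=
  (Finset.univ : Finset (Finset (Fin n → Bool))).sup
    (fun S => goodCount H n (S : Set (Fin n → Bool)))

lemma exDensity_eq {d : ℕ} (H : Set (Fin d → Bool)) (n : ℕ) :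
    exDensity H n = (Msup H n : ℝ) / ((n.choose d : ℝ) * 2 ^ (n - d)) := rfl

lemma goodCount_le_Msup {d : ℕ} (H : Set (Fin d → Bool)) (n : ℕ) (S : Set (Fin n → Bool)) :
    goodCount H n S ≤ Msup H n := by
  classical
  have h : goodCount H n (↑S.toFinset) ≤ Msup H n :=
    Finset.le_sup (f := fun T : Finset (Fin n → Bool) =>
      goodCount H n (T : Set (Fin n → Bool))) (Finset.mem_univ S.toFinset)
  rwa [Set.coe_toFinset] at h

lemma Msup_step {d : ℕ} (H : Set (Fin d → Bool)) (n : ℕ) :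
    Msup H (n+1) * (n + 1 - d) ≤ 2 * (n+1) * Msup H n := by
  classical
  obtain ⟨S, -, hS⟩ := Finset.exists_mem_eq_sup
    (Finset.univ : Finset (Finset (Fin (n+1) → Bool))) ⟨∅, Finset.mem_univ ∅⟩
    (fun S => goodCount H (n+1) (S : Set (Fin (n+1) → Bool)))
  rw [Msup, hS]
  calc goodCount H (n+1) (S : Set (Fin (n+1) → Bool)) * (n+1-d)
      ≤ ∑ jb : Fin (n+1) × Bool,
          goodCount H n (sliceSet n (S : Set (Fin (n+1) → Bool)) jb.1 jb.2) :=
        key_count H n _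
    _ ≤ ∑ _jb : Fin (n+1) × Bool, Msup H n :=
        Finset.sum_le_sum (fun jb _ => goodCount_le_Msup H n _)
    _ = 2 * (n+1) * Msup H n := by
        rw [Finset.sum_const, Finset.card_univ, Fintype.card_prod, Fintype.card_fin,
          Fintype.card_bool, smul_eq_mul]
        ring

lemma exDensity_step {d : ℕ} (H : Set (Fin d → Bool)) (n : ℕ) (hdn : d ≤ n) :
    exDensity H (n+1) ≤ exDensity H n := by
  have h1 := Msup_step H n
  have hnat : Msup H (n+1) * (n.choose d * 2^(n-d)) ≤
      Msup H n * ((n+1).choose d * 2^(n+1-d)) := by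
    have h2 : Msup H (n+1) * n.choose d * (n+1) ≤ Msup H n * ((n+1).choose d * 2) * (n+1) := by
      calc Msup H (n+1) * n.choose d * (n+1)
          = Msup H (n+1) * (n.choose d * (n+1)) := by ring
        _ = Msup H (n+1) * ((n+1).choose d * (n+1-d)) := by rw [Nat.choose_mul_succ_eq]
        _ = Msup H (n+1) * (n+1-d) * (n+1).choose d := by ring
        _ ≤ 2 * (n+1) * Msup H n * (n+1).choose d := Nat.mul_le_mul_right _ h1
        _ = Msup H n * ((n+1).choose d * 2) * (n+1) := by ring
    have h3 : Msup H (n+1) * n.choose d ≤ Msup H n * ((n+1).choose d * 2) :=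
      Nat.le_of_mul_le_mul_right h2 (Nat.succ_pos n)
    have h4 : n + 1 - d = (n - d) + 1 := by omega
    calc Msup H (n+1) * (n.choose d * 2^(n-d))
        = (Msup H (n+1) * n.choose d) * 2^(n-d) := by ring
      _ ≤ (Msup H n * ((n+1).choose d * 2)) * 2^(n-d) := Nat.mul_le_mul_right _ h3
      _ = Msup H n * ((n+1).choose d * 2^(n+1-d)) := by rw [h4, pow_succ]; ring
  rw [exDensity_eq, exDensity_eq]
  rw [div_le_div_iff₀
    (by
      have hpos := Nat.choose_pos (le_trans hdn (Nat.le_succ n))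
      have h5 : (0:ℝ) < ((n+1).choose d : ℝ) := by exact_mod_cast hpos
      positivity)
    (by
      have hpos := Nat.choose_pos hdn
      have h5 : (0:ℝ) < (n.choose d : ℝ) := by exact_mod_cast hpos
      positivity)]
  exact_mod_cast hnat

lemma exDensity_lower (d n : ℕ) (hdn : d ≤ n) :
    (((d:ℝ)+1) * (((n/(d+1) : ℕ) : ℝ))^d) / ((n.choose d : ℝ))
      ≤ exDensity (perfectPath d) n := by
  have h0 := goodCount_lower d n
  have h1 : (d+1) * (n/(d+1))^d * 2^(n-d) ≤ Msup (perfectPath d) n :=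
    le_trans h0 (goodCount_le_Msup _ n _)
  have hC : (0:ℝ) < (n.choose d : ℝ) := by exact_mod_cast Nat.choose_pos hdn
  rw [exDensity_eq]
  rw [div_le_div_iff₀ hC (by positivity)]
  have h2 : (((d:ℝ)+1) * (((n/(d+1) : ℕ) : ℝ))^d * 2^(n-d))
      ≤ (Msup (perfectPath d) n : ℝ) := by
    exact_mod_cast h1
  calc ((d:ℝ)+1) * (((n/(d+1) : ℕ) : ℝ))^d * ((n.choose d : ℝ) * 2^(n-d))
      = (((d:ℝ)+1) * (((n/(d+1) : ℕ) : ℝ))^d * 2^(n-d)) * (n.choose d : ℝ) := by ring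
    _ ≤ (Msup (perfectPath d) n : ℝ) * (n.choose d : ℝ) :=
        mul_le_mul_of_nonneg_right h2 (le_of_lt hC)

lemma exDensity_nonneg {d : ℕ} (H : Set (Fin d → Bool)) (n : ℕ) : 0 ≤ exDensity H n := by
  rw [exDensity_eq]
  apply div_nonneg (Nat.cast_nonneg _)
  positivity

end Stmt17

open Stmt17

/-- for every positive integer `d`, the `d`-cube density of the perfect
path `P_{d+1}` exists and satisfies `π(P_{d+1},d) ≥ d!/(d+1)^{d−1}`. -/
theorem stmt17 {d : ℕ} (hd : 0 < d) :
    ∃ L : ℝ, Filter.Tendsto (fun n => exDensity (perfectPath d) n) Filter.atTop (nhds L) ∧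
      (d.factorial : ℝ) / ((d : ℝ) + 1) ^ (d - 1) ≤ L := by
  classical
  have hmono : Antitone (fun k : ℕ => exDensity (perfectPath d) (k + d)) := by
    apply antitone_nat_of_succ_le
    intro k
    have h := exDensity_step (perfectPath d) (k + d) (by omega)
    have h2 : (k+1) + d = (k + d) + 1 := by omega
    rw [h2]
    exact h
  have hbdd : BddBelow (Set.range fun k : ℕ => exDensity (perfectPath d) (k + d)) := by
    refine ⟨0, ?_⟩
    rintro x ⟨k, rfl⟩
    exact exDensity_nonneg _ _
  set L := ⨅ k : ℕ, exDensity (perfectPath d) (k + d) with hL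
  have htend : Filter.Tendsto (fun k : ℕ => exDensity (perfectPath d) (k + d))
      Filter.atTop (nhds L) := tendsto_atTop_ciInf hmono hbdd
  have htend2 : Filter.Tendsto (fun n => exDensity (perfectPath d) n) Filter.atTop (nhds L) :=
    (Filter.tendsto_add_atTop_iff_nat d).mp htend
  refine ⟨L, htend2, ?_⟩
  set c : ℝ := (d.factorial : ℝ) / ((d : ℝ) + 1) ^ (d - 1) with hc
  have hBtend : Filter.Tendsto (fun n : ℕ => c * (((n:ℝ) - d)/n)^d) Filter.atTop (nhds c) := by
    have h1 : Filter.Tendsto (fun n : ℕ => ((n:ℝ) - d)/n) Filter.atTop (nhds 1) := by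
      have h3 := tendsto_const_div_atTop_nhds_zero_nat (d:ℝ)
      have h4 := (tendsto_const_nhds (x := (1:ℝ)) (f := (Filter.atTop : Filter ℕ))).sub h3
      rw [sub_zero] at h4
      apply h4.congr'
      filter_upwards [Filter.eventually_gt_atTop 0] with n hn
      have hn' : (0:ℝ) < (n:ℝ) := by exact_mod_cast hn
      field_simp
    have h5 := (h1.pow d).const_mul c
    simpa using h5
  apply le_of_tendsto_of_tendsto hBtend htend2
  filter_upwards [Filter.eventually_ge_atTop (d+1)] with n hn
  have hlow := exDensity_lower d n (by omega)
  refine le_trans ?_ hlow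
  set N : ℝ := (n : ℝ) with hN
  set Q : ℝ := ((n/(d+1) : ℕ) : ℝ) with hQdef
  set C : ℝ := (n.choose d : ℝ) with hCdef
  set F : ℝ := (d.factorial : ℝ) with hF
  set D1 : ℝ := (d : ℝ) + 1 with hD1def
  have hD1 : (0:ℝ) < D1 := by rw [hD1def]; positivity
  have hnpos : 0 < n := by omega
  have hNpos : (0:ℝ) < N := by rw [hN]; exact_mod_cast hnpos
  have hNd : (0:ℝ) < N - d := by
    rw [hN]
    have hcast : (d:ℝ) + 1 ≤ (n:ℝ) := by exact_mod_cast hn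
    linarith
  have hC : (0:ℝ) < C := by rw [hCdef]; exact_mod_cast Nat.choose_pos (by omega : d ≤ n)
  have hQ : (N - d)/D1 ≤ Q := by
    have hq1 : n ≤ d + (d+1) * (n/(d+1)) := by
      have h := Nat.mod_add_div n (d+1)
      have h2 : n % (d+1) < d+1 := Nat.mod_lt _ (Nat.succ_pos d)
      omega
    have hq2 : (n:ℝ) ≤ (d:ℝ) + ((d:ℝ)+1) * Q := by
      rw [hQdef]
      exact_mod_cast hq1
    rw [div_le_iff₀ hD1, hD1def, hN]
    linarith
  have hQpow : ((N - d)/D1)^d ≤ Q^d :=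
    pow_le_pow_left₀ (le_of_lt (div_pos hNd hD1)) hQ d
  have hCle : C * F ≤ N^d := by
    have h := Nat.choose_le_pow_div d n (α := ℝ)
    rw [← hCdef, ← hF, ← hN] at h
    have hFpos : (0:ℝ) < F := by rw [hF]; exact_mod_cast Nat.factorial_pos d
    rw [le_div_iff₀ hFpos] at h
    exact h
  have hD1pow : D1 ^ d = D1 ^ (d-1) * D1 := by
    have hdd : d = (d-1) + 1 := by omega
    calc D1 ^ d = D1 ^ ((d-1)+1) := by rw [← hdd]
      _ = D1 ^ (d-1) * D1 := pow_succ _ _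
  have key : c * ((N - d)/N)^d ≤ D1 * ((N-d)/D1)^d / C := by
    rw [hc, div_pow, div_pow, div_mul_div_comm, mul_div_assoc', div_div]
    rw [div_le_div_iff₀ (by positivity) (by
      have : (0:ℝ) < D1^d * C := mul_pos (pow_pos hD1 d) hC
      exact this)]
    rw [hD1pow]
    have h6 : (0:ℝ) ≤ (N-d)^d * D1^(d-1) * D1 := by positivity
    nlinarith [mul_le_mul_of_nonneg_right hCle h6]
  refine le_trans key ?_
  have h8 : D1 * ((N-d)/D1)^d ≤ D1 * Q^d := mul_le_mul_of_nonneg_left hQpow (le_of_lt hD1)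
  exact (div_le_div_iff_of_pos_right hC).mpr h8
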